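/- Let K be a finite extension of Q_p and let f, g ∈ K[x] be monic irreducible separable polynomials of degree n. Let α = α_1, ..., α_n be the roots of f, and let β be a root of g at minimal distance to α, i.e., |β − α| ≤ |β' − α| for all roots β' of g. Then |g(α)| = ∏_{i=1}^n max( |β − α|, |α − α_i| ). -/

import Mathlib

open Polynomial

/-- An additive valuation `v` (written additively, with `v 0 = ⊤`) on a field `Ω`,
extending the `p`-adic valuation of `ℚ_[p]` (scaled by the ramification index `e`),
taking integer values on an intermediate field `K` and normalized so that a
uniformizer `unif` of `K` has valuation `1`. -/
structure PadicSetup (p : ℕ) [Fact p.Prime] (K Ω : Type*) [Field K] [Field Ω]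
    [Algebra ℚ_[p] K] [Algebra ℚ_[p] Ω] [Algebra K Ω] [IsScalarTower ℚ_[p] K Ω] where
  v : Ω → WithTop ℚ
  v_top_iff : ∀ x : Ω, v x = ⊤ ↔ x = 0
  v_mul : ∀ x y : Ω, v (x * y) = v x + v y
  v_add : ∀ x y : Ω, min (v x) (v y) ≤ v (x + y)
  e : ℕ
  e_pos : 0 < e
  v_padic : ∀ x : ℚ_[p], x ≠ 0 →
    v (algebraMap ℚ_[p] Ω x) = (((e : ℤ) * x.valuation : ℤ) : ℚ)
  v_int : ∀ x : K, x ≠ 0 → ∃ m : ℤ, v (algebraMap K Ω x) = ((m : ℚ) : WithTop ℚ)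
  unif : K
  v_unif : v (algebraMap K Ω unif) = 1

variable {p : ℕ} [Fact p.Prime] {K Ω : Type*} [Field K] [Field Ω]
    [Algebra ℚ_[p] K] [Algebra ℚ_[p] Ω] [Algebra K Ω] [IsScalarTower ℚ_[p] K Ω]

/-- `f` is an Eisenstein polynomial of degree `n` over `K` (with respect to the
normalized valuation of `K`): monic of degree `n`, all lower coefficients have
valuation at least `1`, and the constant coefficient has valuation exactly `1`. -/
def PadicSetup.IsEisensteinOfDegree (S : PadicSetup p K Ω) (f : K[X]) (n : ℕ) : Prop :=
  f.Monic ∧ f.natDegree = n ∧ (∀ i < n, 1 ≤ S.v (algebraMap K Ω (f.coeff i))) ∧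
    S.v (algebraMap K Ω (f.coeff 0)) = 1

/-- The `i`-th coefficient of the ramification polynomial `ρ(x) = f(αx+α)/αⁿ` of `f`,
namely `ρ_i = ∑_{k=i}^n C(k,i) f_k α^{k-n}`. -/
noncomputable def PadicSetup.rho (S : PadicSetup p K Ω) (f : K[X]) (n : ℕ) (α : Ω)
    (i : ℕ) : Ω :=
  ∑ k ∈ Finset.Icc i n, (k.choose i : Ω) * algebraMap K Ω (f.coeff k) * α ^ ((k : ℤ) - (n : ℤ))
section AuxLemmas

theorem padic_one_lt_p {p : ℕ} [Fact p.Prime] : 1 < (p : ℝ) := by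
  exact_mod_cast (Fact.out : p.Prime).one_lt

theorem padic_p_pos {p : ℕ} [Fact p.Prime] : (0 : ℝ) < p := lt_trans one_pos padic_one_lt_p

namespace PadicSetup

variable (S : PadicSetup p K Ω)

theorem v_zero' : S.v 0 = ⊤ := (S.v_top_iff 0).mpr rfl

theorem v_ne_top {x : Ω} (hx : x ≠ 0) : S.v x ≠ ⊤ := fun h => hx ((S.v_top_iff x).mp h)

theorem v_one' : S.v 1 = 0 := by
  have h := S.v_mul 1 1
  rw [one_mul] at h
  obtain ⟨q, hq⟩ := WithTop.ne_top_iff_exists.mp (S.v_ne_top (one_ne_zero : (1 : Ω) ≠ 0))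
  rw [← hq] at h ⊢
  have h2 : q = q + q := by exact_mod_cast h
  have h3 : q = 0 := by linarith
  rw [h3]; rfl

theorem v_neg_one' : S.v (-1) = 0 := by
  have h := S.v_mul (-1) (-1)
  rw [neg_one_mul, neg_neg, S.v_one'] at h
  obtain ⟨q, hq⟩ := WithTop.ne_top_iff_exists.mp
    (S.v_ne_top (neg_ne_zero.mpr (one_ne_zero : (1 : Ω) ≠ 0)))
  rw [← hq] at h ⊢
  have h2 : (0 : ℚ) = q + q := by exact_mod_cast h
  have h3 : q = 0 := by linarith
  rw [h3]; rfl

theorem v_neg' (x : Ω) : S.v (-x) = S.v x := by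
  have h := S.v_mul (-1) x
  rwa [neg_one_mul, S.v_neg_one', zero_add] at h

theorem v_add_eq' {x y : Ω} (h : S.v x < S.v y) : S.v (x + y) = S.v x := by
  refine le_antisymm ?_ ?_
  · by_contra hc
    push_neg at hc
    have h2 : x + y + -y = x := by ring
    have h3 := S.v_add (x + y) (-y)
    rw [S.v_neg', h2] at h3
    have h4 : S.v x < min (S.v (x + y)) (S.v y) := lt_min hc h
    exact absurd h3 (not_le.mpr h4)
  · have h3 := S.v_add x y
    rwa [min_eq_left h.le] at h3

theorem v_prod' (m : Multiset Ω) : S.v m.prod = (m.map S.v).sum := by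
  induction m using Multiset.induction with
  | empty => simpa using S.v_one'
  | cons a s ih => simp [S.v_mul, ih]

/-- The rational value of the valuation (`0` at `0`). -/
noncomputable def q (x : Ω) : ℚ := WithTop.untopD 0 (S.v x)

theorem v_eq_q {x : Ω} (hx : x ≠ 0) : S.v x = (S.q x : WithTop ℚ) := by
  obtain ⟨r, hr⟩ := WithTop.ne_top_iff_exists.mp (S.v_ne_top hx)
  rw [← hr]
  simp [q, ← hr]


open scoped Classical

/-- The real absolute value associated to `S.v`, normalized to extend the `p`-adic norm. -/
noncomputable def nr (x : Ω) : ℝ :=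
  if x = 0 then 0 else (p : ℝ) ^ (-((S.q x : ℝ) / (S.e : ℝ)))

theorem nr_nonneg (x : Ω) : 0 ≤ S.nr x := by
  unfold nr
  split
  · exact le_refl 0
  · exact (Real.rpow_pos_of_pos (padic_p_pos (p := p)) _).le

theorem nr_eq_zero_iff (x : Ω) : S.nr x = 0 ↔ x = 0 := by
  unfold nr
  split
  · simpa
  · rename_i h
    simp only [h, iff_false]
    exact (Real.rpow_pos_of_pos (padic_p_pos (p := p)) _).ne'

theorem nr_mul' (x y : Ω) : S.nr (x * y) = S.nr x * S.nr y := by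
  by_cases hx : x = 0
  · simp [nr, hx]
  by_cases hy : y = 0
  · simp [nr, hy]
  have hxy : x * y ≠ 0 := mul_ne_zero hx hy
  have hq : S.q (x * y) = S.q x + S.q y := by
    have h := S.v_mul x y
    rw [S.v_eq_q hx, S.v_eq_q hy, S.v_eq_q hxy] at h
    exact_mod_cast h
  simp only [nr, if_neg hx, if_neg hy, if_neg hxy, hq]
  rw [← Real.rpow_add (padic_p_pos (p := p))]
  congr 1
  push_cast
  ring

theorem nr_add_le_max (x y : Ω) : S.nr (x + y) ≤ max (S.nr x) (S.nr y) := by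
  by_cases hx : x = 0
  · simp [hx, le_max_right]
  by_cases hy : y = 0
  · simp [hy, le_max_left]
  by_cases hxy : x + y = 0
  · simp only [nr, if_pos hxy]
    exact le_max_of_le_left (S.nr_nonneg x)
  have h := S.v_add x y
  rw [S.v_eq_q hx, S.v_eq_q hy, S.v_eq_q hxy] at h
  have hmin : min (S.q x) (S.q y) ≤ S.q (x + y) := by
    rw [← WithTop.coe_min] at h
    exact_mod_cast h
  have he : (0 : ℝ) < (S.e : ℝ) := by exact_mod_cast S.e_pos
  rcases le_total (S.q x) (S.q y) with hle | hle
  · refine le_max_of_le_left ?_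
    simp only [nr, if_neg hx, if_neg hxy]
    apply Real.rpow_le_rpow_of_exponent_le (padic_one_lt_p (p := p)).le
    rw [min_eq_left hle] at hmin
    have : (S.q x : ℝ) ≤ (S.q (x + y) : ℝ) := by exact_mod_cast hmin
    rw [neg_le_neg_iff]
    gcongr
  · refine le_max_of_le_right ?_
    simp only [nr, if_neg hy, if_neg hxy]
    apply Real.rpow_le_rpow_of_exponent_le (padic_one_lt_p (p := p)).le
    rw [min_eq_right hle] at hmin
    have : (S.q y : ℝ) ≤ (S.q (x + y) : ℝ) := by exact_mod_cast hmin
    rw [neg_le_neg_iff]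
    gcongr

theorem nr_add' (x y : Ω) : S.nr (x + y) ≤ S.nr x + S.nr y :=
  le_trans (S.nr_add_le_max x y) (max_le (le_add_of_nonneg_right (S.nr_nonneg y))
    (le_add_of_nonneg_left (S.nr_nonneg x)))

theorem nr_padic (c : ℚ_[p]) : S.nr (algebraMap ℚ_[p] Ω c) = ‖c‖ := by
  by_cases hc : c = 0
  · simp [nr, hc]
  have hco : algebraMap ℚ_[p] Ω c ≠ 0 := fun h => hc ((_root_.map_eq_zero (algebraMap ℚ_[p] Ω)).mp h)
  have hv := S.v_padic c hc
  rw [S.v_eq_q hco] at hv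
  have hq : S.q (algebraMap ℚ_[p] Ω c) = ((S.e : ℚ) * (c.valuation : ℚ)) := by
    exact_mod_cast hv
  have he : (S.e : ℝ) ≠ 0 := by
    have : (0:ℝ) < S.e := by exact_mod_cast S.e_pos
    exact this.ne'
  rw [nr, if_neg hco, hq, Padic.norm_eq_zpow_neg_valuation hc, ← Real.rpow_intCast (p : ℝ) (-c.valuation)]
  congr 1
  push_cast
  field_simp

end PadicSetup

end AuxLemmas
section NormUnique

variable {p : ℕ} [Fact p.Prime]

/-- Any multiplicative norm extending the `p`-adic norm on a finite-dimensional
`ℚ_[p]`-field is dominated by any other such norm. -/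
theorem padic_norm_le {L : Type*} [Field L] [Algebra ℚ_[p] L]
    [FiniteDimensional ℚ_[p] L] (N₁ N₂ : L → ℝ)
    (h1mul : ∀ x y, N₁ (x * y) = N₁ x * N₁ y)
    (h1add : ∀ x y, N₁ (x + y) ≤ N₁ x + N₁ y)
    (h1zero : ∀ x, N₁ x = 0 ↔ x = 0)
    (h1nonneg : ∀ x, 0 ≤ N₁ x)
    (h1map : ∀ c : ℚ_[p], N₁ (algebraMap ℚ_[p] L c) = ‖c‖)
    (h2mul : ∀ x y, N₂ (x * y) = N₂ x * N₂ y)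
    (h2add : ∀ x y, N₂ (x + y) ≤ N₂ x + N₂ y)
    (h2zero : ∀ x, N₂ x = 0 ↔ x = 0)
    (h2nonneg : ∀ x, 0 ≤ N₂ x)
    (h2map : ∀ c : ℚ_[p], N₂ (algebraMap ℚ_[p] L c) = ‖c‖)
    (x : L) : N₂ x ≤ N₁ x := by
  by_cases hx : x = 0
  · rw [hx, (h1zero 0).mpr rfl, (h2zero 0).mpr rfl]
  have h1neg : ∀ y, N₁ (-y) = N₁ y := by
    intro y
    have h := h1mul (algebraMap ℚ_[p] L (-1)) y
    rw [h1map] at h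
    simpa using h
  -- Step A: a linear bound via finite-dimensionality
  obtain ⟨C, hC⟩ : ∃ C : ℝ, ∀ z : L, N₂ z ≤ C * N₁ z := by
    letI : NormedAddCommGroup L := AddGroupNorm.toNormedAddCommGroup
      { toFun := N₁
        map_zero' := (h1zero 0).mpr rfl
        add_le' := h1add
        neg' := h1neg
        eq_zero_of_map_eq_zero' := fun z hz => (h1zero z).mp hz }
    letI : NormedSpace ℚ_[p] L :=
      { norm_smul_le := fun c z => by
          have : c • z = algebraMap ℚ_[p] L c * z := Algebra.smul_def c z
          show N₁ (c • z) ≤ ‖c‖ * N₁ z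
          rw [this, h1mul, h1map] }
    let d := Module.finrank ℚ_[p] L
    let b : Module.Basis (Fin d) ℚ_[p] L := Module.finBasis ℚ_[p] L
    let ι : L →L[ℚ_[p]] (Fin d → ℚ_[p]) :=
      LinearMap.toContinuousLinearMap b.equivFun.toLinearMap
    refine ⟨(∑ i, N₂ (b i)) * ‖ι‖, fun z => ?_⟩
    have hsum : ∀ (s : Finset (Fin d)) (F : Fin d → L),
        N₂ (∑ i ∈ s, F i) ≤ ∑ i ∈ s, N₂ (F i) := by
      intro s F
      induction s using Finset.cons_induction with
      | empty => simp [(h2zero 0).mpr rfl]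
      | cons a s ha ih =>
        rw [Finset.sum_cons, Finset.sum_cons]
        exact le_trans (h2add _ _) (by linarith)
    have hz : z = ∑ i, b.equivFun z i • b i := (b.sum_equivFun z).symm
    have hιz : ∀ i, ‖b.equivFun z i‖ ≤ ‖ι z‖ := by
      intro i
      have : ι z = b.equivFun z := rfl
      rw [← this] at *
      exact norm_le_pi_norm (ι z) i
    calc N₂ z = N₂ (∑ i, b.equivFun z i • b i) := by rw [← hz]
      _ ≤ ∑ i, N₂ (b.equivFun z i • b i) := hsum _ _
      _ ≤ ∑ i, N₂ (b i) * ‖ι z‖ := by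
          refine Finset.sum_le_sum fun i _ => ?_
          rw [Algebra.smul_def, h2mul, h2map, mul_comm]
          exact mul_le_mul_of_nonneg_left (hιz i) (h2nonneg _)
      _ = (∑ i, N₂ (b i)) * ‖ι z‖ := by rw [Finset.sum_mul]
      _ ≤ (∑ i, N₂ (b i)) * (‖ι‖ * ‖z‖) := by
          refine mul_le_mul_of_nonneg_left (ι.le_opNorm z) ?_
          exact Finset.sum_nonneg fun i _ => h2nonneg _
      _ = (∑ i, N₂ (b i)) * ‖ι‖ * N₁ z := by
          rw [← mul_assoc]; rfl
  -- Step B: the power trick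
  have h1one : N₁ 1 = 1 := by
    have := h1map 1
    rwa [map_one, norm_one] at this
  have h2one : N₂ 1 = 1 := by
    have := h2map 1
    rwa [map_one, norm_one] at this
  have hp1 : ∀ m : ℕ, N₁ (x ^ m) = N₁ x ^ m := by
    intro m
    induction m with
    | zero => simpa using h1one
    | succ m ih => rw [pow_succ, pow_succ, h1mul, ih]
  have hp2 : ∀ m : ℕ, N₂ (x ^ m) = N₂ x ^ m := by
    intro m
    induction m with
    | zero => simpa using h2one
    | succ m ih => rw [pow_succ, pow_succ, h2mul, ih]
  by_contra hlt
  push_neg at hlt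
  have hx1 : 0 < N₁ x := by
    rcases (h1nonneg x).lt_or_eq with h | h
    · exact h
    · exact absurd ((h1zero x).mp h.symm) hx
  have hr1 : 1 < N₂ x / N₁ x := (one_lt_div hx1).mpr hlt
  obtain ⟨m, hm⟩ := pow_unbounded_of_one_lt C hr1
  have hle : (N₂ x / N₁ x) ^ m ≤ C := by
    rw [div_pow, div_le_iff₀ (pow_pos hx1 m)]
    calc N₂ x ^ m = N₂ (x ^ m) := (hp2 m).symm
      _ ≤ C * N₁ (x ^ m) := hC _
      _ = C * N₁ x ^ m := by rw [hp1]
  exact absurd hle (not_le.mpr hm)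

end NormUnique
section GaloisInvariance

variable {p : ℕ} [Fact p.Prime] {K Ω : Type*} [Field K] [Field Ω]
    [Algebra ℚ_[p] K] [Algebra ℚ_[p] Ω] [Algebra K Ω] [IsScalarTower ℚ_[p] K Ω]

/-- Galois invariance of the valuation: any `K`-algebra automorphism of `Ω`
preserves `S.v`. -/
theorem PadicSetup.v_algEquiv [FiniteDimensional ℚ_[p] K] [Algebra.IsAlgebraic K Ω]
    (S : PadicSetup p K Ω) (σ : Ω ≃ₐ[K] Ω) (x : Ω) : S.v (σ x) = S.v x := by
  by_cases hx : x = 0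
  · rw [hx, map_zero]
  have hσx : σ x ≠ 0 := fun h => hx (by simpa using σ.injective (h.trans (map_zero σ).symm))
  -- first, `S.nr (σ x) = S.nr x`
  haveI : Algebra.IsAlgebraic ℚ_[p] K := Algebra.IsAlgebraic.of_finite _ _
  haveI : Algebra.IsAlgebraic ℚ_[p] Ω := Algebra.IsAlgebraic.trans ℚ_[p] K Ω
  have hint : IsIntegral ℚ_[p] x := (Algebra.IsAlgebraic.isAlgebraic x).isIntegral
  let L : IntermediateField ℚ_[p] Ω := IntermediateField.adjoin ℚ_[p] {x}
  haveI : FiniteDimensional ℚ_[p] L := IntermediateField.adjoin.finiteDimensional hint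
  have hσq : ∀ c : ℚ_[p], σ (algebraMap ℚ_[p] Ω c) = algebraMap ℚ_[p] Ω c := by
    intro c
    rw [IsScalarTower.algebraMap_apply ℚ_[p] K Ω, σ.commutes]
  have hcoe : ∀ c : ℚ_[p], ((algebraMap ℚ_[p] L c : L) : Ω) = algebraMap ℚ_[p] Ω c := by
    intro c
    rw [IsScalarTower.algebraMap_apply ℚ_[p] L Ω]
    rfl
  set N₁ : L → ℝ := fun y => S.nr (y : Ω) with hN₁
  set N₂ : L → ℝ := fun y => S.nr (σ (y : Ω)) with hN₂
  have c1mul : ∀ y z : L, N₁ (y * z) = N₁ y * N₁ z := fun y z => S.nr_mul' y z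
  have c1add : ∀ y z : L, N₁ (y + z) ≤ N₁ y + N₁ z := fun y z => by
    exact S.nr_add' (y : Ω) (z : Ω)
  have c1zero : ∀ y : L, N₁ y = 0 ↔ y = 0 := fun y => by
    rw [hN₁]
    simp only [S.nr_eq_zero_iff]
    exact_mod_cast Iff.rfl
  have c1nonneg : ∀ y : L, 0 ≤ N₁ y := fun y => S.nr_nonneg _
  have c1map : ∀ c : ℚ_[p], N₁ (algebraMap ℚ_[p] L c) = ‖c‖ := fun c => by
    rw [hN₁]; simp only []; rw [hcoe, S.nr_padic]
  have c2mul : ∀ y z : L, N₂ (y * z) = N₂ y * N₂ z := fun y z => by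
    simp only [hN₂]
    rw [show ((y * z : L) : Ω) = (y : Ω) * (z : Ω) from rfl, map_mul, S.nr_mul']
  have c2add : ∀ y z : L, N₂ (y + z) ≤ N₂ y + N₂ z := fun y z => by
    simp only [hN₂]
    rw [show ((y + z : L) : Ω) = (y : Ω) + (z : Ω) from rfl, map_add]
    exact S.nr_add' _ _
  have c2zero : ∀ y : L, N₂ y = 0 ↔ y = 0 := fun y => by
    rw [hN₂]
    simp only [S.nr_eq_zero_iff, EmbeddingLike.map_eq_zero_iff]
    exact_mod_cast Iff.rfl
  have c2nonneg : ∀ y : L, 0 ≤ N₂ y := fun y => S.nr_nonneg _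
  have c2map : ∀ c : ℚ_[p], N₂ (algebraMap ℚ_[p] L c) = ‖c‖ := fun c => by
    rw [hN₂]; simp only []; rw [hcoe, hσq, S.nr_padic]
  let xL : L := ⟨x, IntermediateField.mem_adjoin_simple_self ℚ_[p] x⟩
  have h21 := padic_norm_le N₁ N₂ c1mul c1add c1zero c1nonneg c1map
    c2mul c2add c2zero c2nonneg c2map xL
  have h12 := padic_norm_le N₂ N₁ c2mul c2add c2zero c2nonneg c2map
    c1mul c1add c1zero c1nonneg c1map xL
  have hnr : S.nr (σ x) = S.nr x := le_antisymm h21 h12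
  -- conclude for `v`
  simp only [PadicSetup.nr, if_neg hσx, if_neg hx] at hnr
  have he : (0 : ℝ) < (S.e : ℝ) := by exact_mod_cast S.e_pos
  have hq : S.q (σ x) = S.q x := by
    have h1 := (Real.rpow_le_rpow_left_iff (padic_one_lt_p (p := p))).mp hnr.le
    have h2 := (Real.rpow_le_rpow_left_iff (padic_one_lt_p (p := p))).mp hnr.ge
    have h3 : (S.q (σ x) : ℝ) = (S.q x : ℝ) := by
      have h4 : (S.q (σ x) : ℝ) / (S.e : ℝ) = (S.q x : ℝ) / (S.e : ℝ) := by
        have h5 := le_antisymm h1 h2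
        linarith
      rw [div_eq_div_iff he.ne' he.ne'] at h4
      exact mul_right_cancel₀ he.ne' h4
    exact_mod_cast h3
  rw [S.v_eq_q hσx, S.v_eq_q hx, hq]

end GaloisInvariance
section MultisetHelpers

theorem multiset_sum_comm' {A B : Type*} (m : Multiset A) (s : Multiset B)
    (F : A → B → WithTop ℚ) :
    (m.map (fun a => (s.map (F a)).sum)).sum
      = (s.map (fun b => (m.map (fun a => F a b)).sum)).sum := by
  induction m using Multiset.induction with
  | empty => simp
  | cons a m ih => simp [Multiset.sum_map_add, ih]

theorem wt_nsmul_coe (n : ℕ) (r : ℚ) :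
    n • ((r : WithTop ℚ)) = ((n • r : ℚ) : WithTop ℚ) := by
  induction n with
  | zero => simp
  | succ n ih => rw [succ_nsmul, succ_nsmul, ih, ← WithTop.coe_add]

theorem wt_nsmul_top {n : ℕ} (hn : n ≠ 0) : n • (⊤ : WithTop ℚ) = ⊤ := by
  obtain ⟨m, rfl⟩ := Nat.exists_eq_succ_of_ne_zero hn
  rw [succ_nsmul, add_top]

theorem wt_nsmul_cancel {n : ℕ} (hn : n ≠ 0) {X Y : WithTop ℚ}
    (h : n • X = n • Y) : X = Y := by
  have hn' : (n : ℚ) ≠ 0 := Nat.cast_ne_zero.mpr hn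
  induction X using WithTop.recTopCoe with
  | top =>
    induction Y using WithTop.recTopCoe with
    | top => rfl
    | coe r =>
      rw [wt_nsmul_top hn, wt_nsmul_coe] at h
      exact absurd h.symm (WithTop.coe_ne_top)
  | coe q =>
    induction Y using WithTop.recTopCoe with
    | top =>
      rw [wt_nsmul_top hn, wt_nsmul_coe] at h
      exact absurd h (WithTop.coe_ne_top)
    | coe r =>
      rw [wt_nsmul_coe, wt_nsmul_coe, WithTop.coe_inj] at h
      rw [WithTop.coe_inj]
      rw [nsmul_eq_mul, nsmul_eq_mul] at h
      exact mul_left_cancel₀ hn' h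

end MultisetHelpers

/-- For monic irreducible separable `f, g` of degree `n` over `K`,
`α` a root of `f`, and `β` a root of `g` closest to `α` (i.e. of maximal valuation
`v(β - α)` among the roots of `g`), one has
`|g(α)| = ∏_{i=1}^n max(|β - α|, |α - α_i|)` over the roots `α_i` of `f`;
additively, `v(g(α)) = ∑_i min( v(β - α), v(α - α_i) )`. -/
theorem dist_eq_prod_max_over_roots
    [FiniteDimensional ℚ_[p] K] [IsAlgClosed Ω] [Algebra.IsAlgebraic K Ω]
    (S : PadicSetup p K Ω)
    (f g : K[X]) (n : ℕ) (hn : 0 < n)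
    (hfm : f.Monic) (hfd : f.natDegree = n) (hfirr : Irreducible f) (hfsep : f.Separable)
    (hgm : g.Monic) (hgd : g.natDegree = n) (hgirr : Irreducible g) (hgsep : g.Separable)
    (α β : Ω) (hα : aeval α f = 0) (hβ : aeval β g = 0)
    (hclosest : ∀ β' ∈ (g.map (algebraMap K Ω)).roots, S.v (β' - α) ≤ S.v (β - α)) :
    S.v (aeval α g) =
      ((f.map (algebraMap K Ω)).roots.map
        (fun a => min (S.v (β - α)) (S.v (α - a)))).sum := by
  classical
  have hcomm : ∀ (σ : Ω ≃ₐ[K] Ω) (x : Ω) (h : K[X]), aeval (σ x) h = σ (aeval x h) :=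
    fun σ x h => by simpa using Polynomial.aeval_algHom_apply σ.toAlgHom x h
  haveI : IsAlgClosure K Ω := (isAlgClosure_iff K Ω).mpr ⟨inferInstance, inferInstance⟩
  set φ := algebraMap K Ω with hφ
  -- `v` of an evaluation as the sum over roots
  have hv_eval : ∀ (h : K[X]), h.Monic → ∀ x : Ω,
      S.v (aeval x h) = ((h.map φ).roots.map (fun b => S.v (x - b))).sum := by
    intro h hm x
    have hsp : h.map φ = ((h.map φ).roots.map fun a => X - C a).prod :=
      (IsAlgClosed.splits (h.map φ)).eq_prod_roots_of_monic (hm.map φ)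
    have heval : aeval x h = ((h.map φ).roots.map fun b => x - b).prod := by
      rw [aeval_def, ← eval_map]
      conv_lhs => rw [hsp]
      rw [eval_multiset_prod, Multiset.map_map]
      congr 1
      refine Multiset.map_congr rfl fun b _ => ?_
      simp
    rw [heval, S.v_prod', Multiset.map_map]
    rfl
  -- roots give minimal polynomials
  have hminf : minpoly K α = f := (minpoly.eq_of_irreducible_of_monic hfirr hα hfm).symm
  have hming : minpoly K β = g := (minpoly.eq_of_irreducible_of_monic hgirr hβ hgm).symm
  have hroot_f : ∀ a ∈ (f.map φ).roots, aeval a f = 0 := by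
    intro a ha
    have h2 := (Polynomial.mem_roots'.mp ha).2
    rwa [Polynomial.IsRoot, Polynomial.eval_map, ← aeval_def] at h2
  have hroot_g : ∀ b ∈ (g.map φ).roots, aeval b g = 0 := by
    intro b hb
    have h2 := (Polynomial.mem_roots'.mp hb).2
    rwa [Polynomial.IsRoot, Polynomial.eval_map, ← aeval_def] at h2
  have hconjf : ∀ a ∈ (f.map φ).roots, ∃ σ : Ω ≃ₐ[K] Ω, σ a = α := by
    intro a ha
    exact minpoly.exists_algEquiv_of_root (Algebra.IsAlgebraic.isAlgebraic α)
      (by rw [hminf]; exact hroot_f a ha)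
  have hconjg : ∀ b ∈ (g.map φ).roots, ∃ σ : Ω ≃ₐ[K] Ω, σ b = β := by
    intro b hb
    exact minpoly.exists_algEquiv_of_root (Algebra.IsAlgebraic.isAlgebraic β)
      (by rw [hming]; exact hroot_g b hb)
  set t := S.v (β - α) with ht
  -- the key pointwise identity
  have hkey : ∀ a ∈ (f.map φ).roots, S.v (β - a) = min t (S.v (α - a)) := by
    intro a ha
    have hdecomp : β - a = (β - α) + (α - a) := by ring
    rcases lt_trichotomy (S.v (α - a)) t with hlt | heq | hgt
    · rw [min_eq_right hlt.le, hdecomp, add_comm (β - α) (α - a), S.v_add_eq' hlt]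
    · rw [← heq, min_self]
      refine le_antisymm ?_ ?_
      · obtain ⟨σ, hσ⟩ := hconjf a ha
        have hmem : σ β ∈ (g.map φ).roots := by
          rw [Polynomial.mem_roots']
          refine ⟨(hgm.map φ).ne_zero, ?_⟩
          show eval (σ β) (g.map φ) = 0
          rw [Polynomial.eval_map, ← aeval_def, hcomm σ β g, hβ, map_zero]
        have hle := hclosest (σ β) hmem
        have h2 : S.v (β - a) = S.v (σ β - α) := by
          rw [← S.v_algEquiv σ (β - a), map_sub, hσ]
        rw [h2]
        exact hle.trans_eq heq.symm
      · have h3 := S.v_add (β - α) (α - a)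
        rw [← hdecomp] at h3
        have h4 : min (S.v (β - α)) (S.v (α - a)) = S.v (α - a) := by
          rw [heq, ← ht, min_self]
        rwa [h4] at h3
    · rw [min_eq_left hgt.le, hdecomp, S.v_add_eq' hgt]
  -- cardinalities
  have hcardf : Multiset.card (f.map φ).roots = n := by
    rw [← (IsAlgClosed.splits (f.map φ)).natDegree_eq_card_roots, natDegree_map, hfd]
  have hcardg : Multiset.card (g.map φ).roots = n := by
    rw [← (IsAlgClosed.splits (g.map φ)).natDegree_eq_card_roots, natDegree_map, hgd]
  -- sums of constants
  have hconst : ∀ (m : Multiset Ω) (F : Ω → WithTop ℚ) (c : WithTop ℚ),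
      (∀ x ∈ m, F x = c) → (m.map F).sum = Multiset.card m • c := by
    intro m F c hF
    rw [Multiset.map_congr rfl hF, Multiset.map_const', Multiset.sum_replicate]
  -- the symmetry `v(g(α)) = v(f(β))`
  have hAB : S.v (aeval α g) = S.v (aeval β f) := by
    have h1 : ((f.map φ).roots.map (fun a => S.v (aeval a g))).sum = n • S.v (aeval α g) := by
      have := hconst ((f.map φ).roots) (fun a => S.v (aeval a g)) (S.v (aeval α g)) ?_
      · rwa [hcardf] at this
      · intro a ha
        obtain ⟨σ, hσ⟩ := hconjf a ha
        calc S.v (aeval a g) = S.v (σ (aeval a g)) := (S.v_algEquiv σ _).symm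
          _ = S.v (aeval α g) := by rw [← hcomm σ a g, hσ]
    have h2 : ((g.map φ).roots.map (fun b => S.v (aeval b f))).sum = n • S.v (aeval β f) := by
      have := hconst ((g.map φ).roots) (fun b => S.v (aeval b f)) (S.v (aeval β f)) ?_
      · rwa [hcardg] at this
      · intro b hb
        obtain ⟨σ, hσ⟩ := hconjg b hb
        calc S.v (aeval b f) = S.v (σ (aeval b f)) := (S.v_algEquiv σ _).symm
          _ = S.v (aeval β f) := by rw [← hcomm σ b f, hσ]
    have h3 : ((f.map φ).roots.map (fun a => S.v (aeval a g))).sum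
        = ((g.map φ).roots.map (fun b => S.v (aeval b f))).sum := by
      rw [Multiset.map_congr rfl (fun a _ => hv_eval g hgm a),
        multiset_sum_comm' ((f.map φ).roots) ((g.map φ).roots) (fun a b => S.v (a - b))]
      refine congrArg Multiset.sum (Multiset.map_congr rfl fun b _ => ?_)
      rw [hv_eval f hfm b]
      refine congrArg Multiset.sum (Multiset.map_congr rfl fun a _ => ?_)
      rw [← S.v_neg' (a - b), neg_sub]
    rw [h1, h2] at h3
    exact wt_nsmul_cancel hn.ne' h3
  rw [hAB, hv_eval f hfm β]
  exact congrArg Multiset.sum (Multiset.map_congr rfl hkey)
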